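/- arXiv:1309.3963 — 4 statements merged into one kernel-verified Lean document; each statement's English description precedes it below -/
import Mathlib

section
/- Let C be a closed disk of radius √2 in the plane, and let Q be a finite set of pairwise non-intersecting closed axis-parallel unit squares each of whose bottom-left corner lies in C. Then Q contains at most eight squares. -/
/-- The closed axis-parallel unit square with bottom-left corner `p`. -/
def unitSquare (p : ℝ × ℝ) : Set (ℝ × ℝ) :=
  Set.Icc p.1 (p.1 + 1) ×ˢ Set.Icc p.2 (p.2 + 1)

/-- If two closed unit squares are disjoint, their anchors are far apart in
some coordinate. -/
lemma squares_far {p q : ℝ × ℝ} (h : unitSquare p ∩ unitSquare q = ∅) :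
    1 < |p.1 - q.1| ∨ 1 < |p.2 - q.2| := by
  by_contra hc
  push_neg at hc
  obtain ⟨h1, h2⟩ := hc
  rw [abs_le] at h1 h2
  have hmem : (max p.1 q.1, max p.2 q.2) ∈ unitSquare p ∩ unitSquare q := by
    refine ⟨⟨⟨le_max_left _ _, ?_⟩, ⟨le_max_left _ _, ?_⟩⟩,
      ⟨⟨le_max_right _ _, ?_⟩, ⟨le_max_right _ _, ?_⟩⟩⟩ <;>
    · apply max_le <;> linarith [h1.1, h1.2, h2.1, h2.2]
  rw [h] at hmem
  exact hmem

/-- A finset of reals with pairwise gaps `> 1` inside an interval of length `< 3`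
has at most 3 elements. -/
lemma sep_card_le {t : Finset ℝ} (lo : ℝ)
    (hsep : ∀ a ∈ t, ∀ b ∈ t, a ≠ b → 1 < |a - b|)
    (hbd : ∀ a ∈ t, lo ≤ a ∧ a < lo + 3) : t.card ≤ 3 := by
  classical
  have h : t.card ≤ ({0, 1, 2} : Finset ℤ).card := by
    apply Finset.card_le_card_of_injOn (fun a => (⌊a - lo⌋ : ℤ))
    · intro a ha
      obtain ⟨h1, h2⟩ := hbd a ha
      have h0 : (0:ℤ) ≤ ⌊a - lo⌋ := Int.floor_nonneg.mpr (by linarith)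
      have h3 : ⌊a - lo⌋ < 3 := Int.floor_lt.mpr (by push_cast; linarith)
      simp only [Finset.coe_insert, Finset.coe_singleton, Set.mem_insert_iff,
        Set.mem_singleton_iff, Finset.mem_insert, Finset.mem_singleton]
      omega
    · intro a ha b hb hfe
      by_contra hne
      have hgap := hsep a ha b hb hne
      have h1 : |a - lo - (b - lo)| < 1 := Int.abs_sub_lt_one_of_floor_eq_floor hfe
      have he : a - lo - (b - lo) = a - b := by ring
      rw [he] at h1
      linarith
  simpa using h

/-- In a finset of three reals with pairwise gaps `> 1`, the extremes differ
by more than 2. -/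
lemma sep_three {t : Finset ℝ} (hcard : t.card = 3)
    (hsep : ∀ a ∈ t, ∀ b ∈ t, a ≠ b → 1 < |a - b|) :
    ∃ u1 ∈ t, ∃ u3 ∈ t, 2 < u3 - u1 := by
  classical
  have hne : t.Nonempty := by rw [← Finset.card_pos, hcard]; norm_num
  have hmid : ((t.erase (t.min' hne)).erase (t.max' hne)).Nonempty := by
    rw [← Finset.card_pos]
    have h1 : t.card - 1 ≤ (t.erase (t.min' hne)).card :=
      Finset.pred_card_le_card_erase
    have h2 : (t.erase (t.min' hne)).card - 1 ≤
        ((t.erase (t.min' hne)).erase (t.max' hne)).card :=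
      Finset.pred_card_le_card_erase
    omega
  obtain ⟨b, hb⟩ := hmid
  have hbmax : b ≠ t.max' hne := Finset.ne_of_mem_erase hb
  have hb' : b ∈ t.erase (t.min' hne) := Finset.mem_of_mem_erase hb
  have hbmin : b ≠ t.min' hne := Finset.ne_of_mem_erase hb'
  have hbt : b ∈ t := Finset.mem_of_mem_erase hb'
  have g1 := hsep b hbt _ (t.min'_mem hne) hbmin
  have g2 := hsep b hbt _ (t.max'_mem hne) hbmax
  have l1 := t.min'_le b hbt
  have l2 := t.le_max' b hbt
  refine ⟨t.min' hne, t.min'_mem hne, t.max' hne, t.max'_mem hne, ?_⟩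
  rcases abs_cases (b - t.min' hne) with ⟨e1, _⟩ | ⟨_, e1⟩ <;>
  rcases abs_cases (b - t.max' hne) with ⟨e2, _⟩ | ⟨_, e2⟩ <;> linarith


/-- Tangent-line bounds from membership in the disk of radius √2. -/
lemma disk_tangent {x y : ℝ} (h : x ^ 2 + y ^ 2 ≤ 2) :
    y - x ≤ 2 ∧ y + x ≤ 2 ∧ -y - x ≤ 2 ∧ -y + x ≤ 2 := by
  refine ⟨?_, ?_, ?_, ?_⟩
  · nlinarith [sq_nonneg (x + 1), sq_nonneg (y - 1)]
  · nlinarith [sq_nonneg (x - 1), sq_nonneg (y - 1)]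
  · nlinarith [sq_nonneg (x + 1), sq_nonneg (y + 1)]
  · nlinarith [sq_nonneg (x - 1), sq_nonneg (y + 1)]

/-- Analysis of a single column: at most three points, and when exactly three,
two of them have vertical distance greater than 2. -/
lemma col_analysis (c2 : ℝ) (col : Finset (ℝ × ℝ))
    (hsep : ∀ p ∈ col, ∀ q ∈ col, p ≠ q → 1 < |p.2 - q.2|)
    (hbd : ∀ p ∈ col, -1.41422 ≤ p.2 - c2 ∧ p.2 - c2 ≤ 1.41422) :
    col.card ≤ 3 ∧
      (col.card = 3 → ∃ p1 ∈ col, ∃ p3 ∈ col, 2 < (p3.2 - c2) - (p1.2 - c2)) := by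
  classical
  set ys := col.image (fun p => p.2 - c2) with hys
  have hinj : Set.InjOn (fun p : ℝ × ℝ => p.2 - c2) col := by
    intro p hp q hq he
    by_contra hne
    have hgap := hsep p hp q hq hne
    have hz : p.2 - q.2 = 0 := by
      have : p.2 - c2 = q.2 - c2 := he
      linarith
    rw [hz, abs_zero] at hgap
    linarith
  have hcard : ys.card = col.card := Finset.card_image_of_injOn hinj
  have hysep : ∀ a ∈ ys, ∀ b ∈ ys, a ≠ b → 1 < |a - b| := by
    intro a ha b hb hne
    obtain ⟨p, hp, hpe⟩ := Finset.mem_image.mp ha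
    obtain ⟨q, hq, hqe⟩ := Finset.mem_image.mp hb
    have hpq : p ≠ q := fun h => hne (by rw [← hpe, ← hqe, h])
    have hgap := hsep p hp q hq hpq
    have he2 : a - b = p.2 - q.2 := by rw [← hpe, ← hqe]; ring
    rw [he2]
    exact hgap
  have hbd' : ∀ a ∈ ys, -1.41422 ≤ a ∧ a < -1.41422 + 3 := by
    intro a ha
    obtain ⟨p, hp, hpe⟩ := Finset.mem_image.mp ha
    have h := hbd p hp
    rw [← hpe]
    exact ⟨h.1, by linarith [h.2]⟩
  constructor
  · rw [← hcard]
    exact sep_card_le _ hysep hbd'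
  · intro h3
    obtain ⟨u1, hu1, u3, hu3, hgap⟩ := sep_three (by rw [hcard, h3]) hysep
    obtain ⟨p1, hp1, he1⟩ := Finset.mem_image.mp hu1
    obtain ⟨p3, hp3, he3⟩ := Finset.mem_image.mp hu3
    exact ⟨p1, hp1, p3, hp3, by rw [he1, he3]; exact hgap⟩

set_option maxHeartbeats 2000000 in
/-- A finite set of pairwise non-intersecting closed axis-parallel unit squares,
whose bottom-left corners all lie in a closed disk of radius √2 centered at `c`,
contains at most eight squares. -/
theorem packing_lemma_eight_squares (c : ℝ × ℝ) (Q : Finset (ℝ × ℝ))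
    (hC : ∀ p ∈ Q, Real.sqrt ((p.1 - c.1) ^ 2 + (p.2 - c.2) ^ 2) ≤ Real.sqrt 2)
    (hdisj : ∀ p ∈ Q, ∀ q ∈ Q, p ≠ q → unitSquare p ∩ unitSquare q = ∅) :
    Q.card ≤ 8 := by
  classical
  by_contra hcard
  push_neg at hcard
  -- separation of anchors
  have far : ∀ p ∈ Q, ∀ q ∈ Q, p ≠ q → 1 < |p.1 - q.1| ∨ 1 < |p.2 - q.2| :=
    fun p hp q hq hne => squares_far (hdisj p hp q hq hne)
  -- anchors lie in the disk
  have disk : ∀ p ∈ Q, (p.1 - c.1) ^ 2 + (p.2 - c.2) ^ 2 ≤ 2 := by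
    intro p hp
    have h := hC p hp
    have h0 : (0:ℝ) ≤ (p.1 - c.1) ^ 2 + (p.2 - c.2) ^ 2 := by positivity
    nlinarith [Real.sq_sqrt h0, Real.sq_sqrt (by norm_num : (0:ℝ) ≤ 2),
      Real.sqrt_nonneg ((p.1 - c.1) ^ 2 + (p.2 - c.2) ^ 2), Real.sqrt_nonneg 2]
  -- coordinate bounds
  have bx : ∀ p ∈ Q, -1.41422 ≤ p.1 - c.1 ∧ p.1 - c.1 ≤ 1.41422 := by
    intro p hp
    have h := disk p hp
    constructor <;> nlinarith [sq_nonneg (p.2 - c.2)]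
  have by' : ∀ p ∈ Q, -1.41422 ≤ p.2 - c.2 ∧ p.2 - c.2 ≤ 1.41422 := by
    intro p hp
    have h := disk p hp
    constructor <;> nlinarith [sq_nonneg (p.1 - c.1)]
  -- the three columns
  set L := Q.filter (fun p => p.1 - c.1 < -(1/2)) with hLdef
  set M := Q.filter (fun p => -(1/2) ≤ p.1 - c.1 ∧ p.1 - c.1 ≤ 1/2) with hMdef
  set R := Q.filter (fun p => 1/2 < p.1 - c.1) with hRdef
  have hcardsplit : L.card + M.card + R.card = Q.card := by
    have h1 := Finset.card_filter_add_card_filter_not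
      (s := Q) (p := fun p => p.1 - c.1 < -(1/2))
    have h2 := Finset.card_filter_add_card_filter_not
      (s := Q.filter (fun p => ¬ p.1 - c.1 < -(1/2))) (p := fun p => p.1 - c.1 ≤ 1/2)
    simp only [Finset.filter_filter] at h2
    have hM2 : M = Q.filter (fun a => (¬ a.1 - c.1 < -(1/2)) ∧ a.1 - c.1 ≤ 1/2) := by
      rw [hMdef]
      apply Finset.filter_congr
      intro p _
      simp only [not_lt]
    have hR2 : R = Q.filter (fun a => (¬ a.1 - c.1 < -(1/2)) ∧ ¬ a.1 - c.1 ≤ 1/2) := by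
      rw [hRdef]
      apply Finset.filter_congr
      intro p _
      simp only [not_lt, not_le]
      constructor
      · intro h; exact ⟨by linarith, h⟩
      · rintro ⟨_, h⟩; exact h
    rw [hLdef, hM2, hR2]
    omega
  -- within a column, y-coordinates are pairwise separated and injective
  have colsep : ∀ (col : Finset (ℝ × ℝ)), col ⊆ Q →
      (∀ p ∈ col, ∀ q ∈ col, |p.1 - q.1| ≤ 1) →
      (∀ p ∈ col, ∀ q ∈ col, p ≠ q → 1 < |p.2 - q.2|) := by
    intro col hsub hw p hp q hq hne
    rcases far p (hsub hp) q (hsub hq) hne with h | h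
    · exact absurd h (not_lt.mpr (hw p hp q hq))
    · exact h
  -- column widths
  have hwL : ∀ p ∈ L, ∀ q ∈ L, |p.1 - q.1| ≤ 1 := by
    intro p hp q hq
    rw [hLdef] at hp hq
    obtain ⟨hpQ, hpx⟩ := Finset.mem_filter.mp hp
    obtain ⟨hqQ, hqx⟩ := Finset.mem_filter.mp hq
    have b1 := (bx p hpQ).1
    have b2 := (bx q hqQ).1
    rw [abs_le]
    constructor <;> linarith
  have hwM : ∀ p ∈ M, ∀ q ∈ M, |p.1 - q.1| ≤ 1 := by
    intro p hp q hq
    rw [hMdef] at hp hq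
    obtain ⟨hpQ, hpx⟩ := Finset.mem_filter.mp hp
    obtain ⟨hqQ, hqx⟩ := Finset.mem_filter.mp hq
    rw [abs_le]
    constructor <;> linarith [hpx.1, hpx.2, hqx.1, hqx.2]
  have hwR : ∀ p ∈ R, ∀ q ∈ R, |p.1 - q.1| ≤ 1 := by
    intro p hp q hq
    rw [hRdef] at hp hq
    obtain ⟨hpQ, hpx⟩ := Finset.mem_filter.mp hp
    obtain ⟨hqQ, hqx⟩ := Finset.mem_filter.mp hq
    have b1 := (bx p hpQ).2
    have b2 := (bx q hqQ).2
    rw [abs_le]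
    constructor <;> linarith
  have hsubL : L ⊆ Q := by rw [hLdef]; exact Finset.filter_subset _ _
  have hsubM : M ⊆ Q := by rw [hMdef]; exact Finset.filter_subset _ _
  have hsubR : R ⊆ Q := by rw [hRdef]; exact Finset.filter_subset _ _
  obtain ⟨hL3, hLex⟩ := col_analysis c.2 L (colsep L hsubL hwL)
    (fun p hp => by' p (hsubL hp))
  obtain ⟨hM3, hMex⟩ := col_analysis c.2 M (colsep M hsubM hwM)
    (fun p hp => by' p (hsubM hp))
  obtain ⟨hR3, hRex⟩ := col_analysis c.2 R (colsep R hsubR hwR)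
    (fun p hp => by' p (hsubR hp))
  have hc9 : L.card = 3 ∧ M.card = 3 ∧ R.card = 3 := by omega
  obtain ⟨l1, hl1, l3, hl3, gapL⟩ := hLex hc9.1
  obtain ⟨m1, hm1, m3, hm3, gapM⟩ := hMex hc9.2.1
  obtain ⟨r1, hr1, r3, hr3, gapR⟩ := hRex hc9.2.2
  rw [hLdef] at hl1 hl3
  rw [hMdef] at hm1 hm3
  rw [hRdef] at hr1 hr3
  obtain ⟨hl1Q, hxl1⟩ := Finset.mem_filter.mp hl1
  obtain ⟨hl3Q, hxl3⟩ := Finset.mem_filter.mp hl3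
  obtain ⟨hm1Q, hxm1⟩ := Finset.mem_filter.mp hm1
  obtain ⟨hm3Q, hxm3⟩ := Finset.mem_filter.mp hm3
  obtain ⟨hr1Q, hxr1⟩ := Finset.mem_filter.mp hr1
  obtain ⟨hr3Q, hxr3⟩ := Finset.mem_filter.mp hr3
  have dl1 := disk l1 hl1Q
  have dl3 := disk l3 hl3Q
  have dm1 := disk m1 hm1Q
  have dm3 := disk m3 hm3Q
  have dr1 := disk r1 hr1Q
  have dr3 := disk r3 hr3Q
  -- vertical bounds
  have yl3ub : l3.2 - c.2 ≤ 1.32289 := by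
    nlinarith [sq_nonneg (l3.1 - c.1 + 1/2), sq_nonneg (l3.2 - c.2 - 1.32289)]
  have yl1lb : -1.32289 ≤ l1.2 - c.2 := by
    nlinarith [sq_nonneg (l1.1 - c.1 + 1/2), sq_nonneg (l1.2 - c.2 + 1.32289)]
  have yr3ub : r3.2 - c.2 ≤ 1.32289 := by
    nlinarith [sq_nonneg (r3.1 - c.1 - 1/2), sq_nonneg (r3.2 - c.2 - 1.32289)]
  have yr1lb : -1.32289 ≤ r1.2 - c.2 := by
    nlinarith [sq_nonneg (r1.1 - c.1 - 1/2), sq_nonneg (r1.2 - c.2 + 1.32289)]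
  have ym3ub := (by' m3 hm3Q).2
  have ym1lb := (by' m1 hm1Q).1
  -- consequences of the vertical gaps
  have yl3lb : 0.67711 < l3.2 - c.2 := by linarith
  have yl1ub : l1.2 - c.2 < -0.67711 := by linarith
  have yr3lb : 0.67711 < r3.2 - c.2 := by linarith
  have yr1ub : r1.2 - c.2 < -0.67711 := by linarith
  have ym3lb : 0.58578 < m3.2 - c.2 := by linarith
  have ym1ub : m1.2 - c.2 < -0.58578 := by linarith
  -- horizontal separation forced in each extreme row
  have c3 : 1 < m3.1 - l3.1 := by
    have hne : l3 ≠ m3 := by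
      intro h
      rw [h] at hxl3
      linarith [hxm3.1]
    rcases far l3 hl3Q m3 hm3Q hne with h | h
    · rcases abs_cases (l3.1 - m3.1) with ⟨he, _⟩ | ⟨he, _⟩ <;> rw [he] at h <;>
        [linarith [hxm3.1]; linarith]
    · rcases abs_cases (l3.2 - m3.2) with ⟨he, _⟩ | ⟨he, _⟩ <;> rw [he] at h <;> linarith
  have c1 : 1 < m1.1 - l1.1 := by
    have hne : l1 ≠ m1 := by
      intro h
      rw [h] at hxl1
      linarith [hxm1.1]
    rcases far l1 hl1Q m1 hm1Q hne with h | h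
    · rcases abs_cases (l1.1 - m1.1) with ⟨he, _⟩ | ⟨he, _⟩ <;> rw [he] at h <;>
        [linarith [hxm1.1]; linarith]
    · rcases abs_cases (l1.2 - m1.2) with ⟨he, _⟩ | ⟨he, _⟩ <;> rw [he] at h <;> linarith
  have d3 : 1 < r3.1 - m3.1 := by
    have hne : m3 ≠ r3 := by
      intro h
      rw [h] at hxm3
      linarith [hxm3.2]
    rcases far m3 hm3Q r3 hr3Q hne with h | h
    · rcases abs_cases (m3.1 - r3.1) with ⟨he, _⟩ | ⟨he, _⟩ <;> rw [he] at h <;>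
        [linarith [hxm3.2]; linarith]
    · rcases abs_cases (m3.2 - r3.2) with ⟨he, _⟩ | ⟨he, _⟩ <;> rw [he] at h <;> linarith
  have d1 : 1 < r1.1 - m1.1 := by
    have hne : m1 ≠ r1 := by
      intro h
      rw [h] at hxm1
      linarith [hxm1.2]
    rcases far m1 hm1Q r1 hr1Q hne with h | h
    · rcases abs_cases (m1.1 - r1.1) with ⟨he, _⟩ | ⟨he, _⟩ <;> rw [he] at h <;>
        [linarith [hxm1.2]; linarith]
    · rcases abs_cases (m1.2 - r1.2) with ⟨he, _⟩ | ⟨he, _⟩ <;> rw [he] at h <;> linarith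
  -- tangent bounds and the final contradiction
  have t1 := (disk_tangent dl3).1
  have t2 := (disk_tangent dl1).2.2
  have t3 := (disk_tangent dr3).2.1
  have t4 := (disk_tangent dr1).2.2.2
  linarith [gapL, gapR, c3, c1, d3, d1, t1, t2, t3, t4]
end

section
/- Let C be a closed disk of radius √2 in the plane and let Q' be a finite set of pairwise non-intersecting closed axis-parallel unit squares each of whose bottom-left corner lies in C. If there exists a vertical line that intersects every square of Q', then Q' contains at most three squares. -/
/-- A finite set of pairwise non-intersecting closed axis-parallel unit squares,
with bottom-left corners in a closed disk of radius √2 centered at `c`, all of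
which are stabbed by a common vertical line, contains at most three squares. -/
theorem stabbed_squares_at_most_three (c : ℝ × ℝ) (Q : Finset (ℝ × ℝ))
    (hC : ∀ p ∈ Q, Real.sqrt ((p.1 - c.1) ^ 2 + (p.2 - c.2) ^ 2) ≤ Real.sqrt 2)
    (hdisj : ∀ p ∈ Q, ∀ q ∈ Q, p ≠ q → unitSquare p ∩ unitSquare q = ∅)
    (hline : ∃ x : ℝ, ∀ p ∈ Q, ∃ y : ℝ, (x, y) ∈ unitSquare p) :
    Q.card ≤ 3 := by
  obtain ⟨x, hx⟩ := hline
  -- y-coordinates of distinct anchors differ by more than 1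
  have key : ∀ p ∈ Q, ∀ q ∈ Q, p ≠ q → 1 < |p.2 - q.2| := by
    intro p hp q hq hne
    by_contra h
    push_neg at h
    rw [abs_sub_le_iff] at h
    obtain ⟨yp, hyp⟩ := hx p hp
    obtain ⟨yq, hyq⟩ := hx q hq
    have hpx : x ∈ Set.Icc p.1 (p.1 + 1) := hyp.1
    have hqx : x ∈ Set.Icc q.1 (q.1 + 1) := hyq.1
    have hm : (x, max p.2 q.2) ∈ unitSquare p ∩ unitSquare q := by
      constructor
      · exact ⟨hpx, le_max_left _ _, max_le (by linarith) (by linarith [h.2])⟩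
      · exact ⟨hqx, le_max_right _ _, max_le (by linarith [h.1]) (by linarith)⟩
    rw [hdisj p hp q hq hne] at hm
    exact hm
  -- y-coordinates lie in an interval of length 2√2
  have ybound : ∀ p ∈ Q, c.2 - Real.sqrt 2 ≤ p.2 ∧ p.2 ≤ c.2 + Real.sqrt 2 := by
    intro p hp
    have h := hC p hp
    have h1 : (p.1 - c.1) ^ 2 + (p.2 - c.2) ^ 2 ≤ 2 := by
      have := Real.sq_sqrt (by positivity : (0:ℝ) ≤ (p.1 - c.1) ^ 2 + (p.2 - c.2) ^ 2)
      nlinarith [Real.sqrt_nonneg ((p.1 - c.1) ^ 2 + (p.2 - c.2) ^ 2),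
        Real.sq_sqrt (by norm_num : (0:ℝ) ≤ 2), Real.sqrt_nonneg 2]
    have h2 : |p.2 - c.2| ≤ Real.sqrt 2 := by
      rw [← Real.sqrt_sq_eq_abs]
      exact Real.sqrt_le_sqrt (by nlinarith [sq_nonneg (p.1 - c.1)])
    rw [abs_le] at h2
    constructor <;> linarith [h2.1, h2.2]
  -- consider the image of y-coordinates
  set S : Finset ℝ := Q.image Prod.snd with hS
  have hinj : Set.InjOn Prod.snd (Q : Set (ℝ × ℝ)) := by
    intro p hp q hq hpq
    by_contra hne
    have := key p hp q hq hne
    rw [hpq] at this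
    simp at this
    linarith
  have hcard : S.card = Q.card := Finset.card_image_of_injOn hinj
  by_contra hle
  push_neg at hle
  have h4 : 4 ≤ S.card := by omega
  -- pick 4 increasing elements
  let e := S.orderIsoOfFin rfl
  have hmem : ∀ i : Fin S.card, (e i : ℝ) ∈ S := fun i => (e i).2
  have keyS : ∀ a ∈ S, ∀ b ∈ S, a ≠ b → 1 < |a - b| := by
    intro a ha b hb hab
    obtain ⟨p, hp, rfl⟩ := Finset.mem_image.mp ha
    obtain ⟨q, hq, rfl⟩ := Finset.mem_image.mp hb
    exact key p hp q hq (fun h => hab (by rw [h]))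
  have yS : ∀ a ∈ S, c.2 - Real.sqrt 2 ≤ a ∧ a ≤ c.2 + Real.sqrt 2 := by
    intro a ha
    obtain ⟨p, hp, rfl⟩ := Finset.mem_image.mp ha
    exact ybound p hp
  have gap : ∀ i j : Fin S.card, i < j → (e i : ℝ) + 1 < e j := by
    intro i j hij
    have hlt : (e i : ℝ) < e j := by
      have := e.strictMono hij
      exact_mod_cast this
    have := keyS _ (hmem i) _ (hmem j) (ne_of_lt hlt)
    have habs : |(e i : ℝ) - (e j : ℝ)| = (e j : ℝ) - e i := by
      rw [abs_sub_comm]; exact abs_of_pos (by linarith)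
    rw [habs] at this
    linarith
  have g01 := gap ⟨0, by omega⟩ ⟨1, by omega⟩ (by simp)
  have g12 := gap ⟨1, by omega⟩ ⟨2, by omega⟩ (by simp)
  have g23 := gap ⟨2, by omega⟩ ⟨3, by omega⟩ (by simp [Fin.lt_def])
  have y0 := yS _ (hmem ⟨0, by omega⟩)
  have y3 := yS _ (hmem ⟨3, by omega⟩)
  have hs2 : Real.sqrt 2 ^ 2 = 2 := Real.sq_sqrt (by norm_num)
  nlinarith [Real.sqrt_nonneg 2, y0.1, y3.2, g01, g12, g23]
end

section
/- Let ℓ be a closed axis-parallel unit square with bottom-left corner p, and let Q be a finite set of pairwise non-intersecting closed axis-parallel unit squares each of which has non-empty intersection with ℓ. Then Q contains at most eight squares. -/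
/-- A finite set of pairwise non-intersecting closed axis-parallel unit squares,
each of which intersects a fixed closed axis-parallel unit square with
bottom-left corner `p`, contains at most eight squares. -/
theorem at_most_eight_squares_meeting_a_square (p : ℝ × ℝ) (Q : Finset (ℝ × ℝ))
    (hmeet : ∀ q ∈ Q, (unitSquare q ∩ unitSquare p).Nonempty)
    (hdisj : ∀ q ∈ Q, ∀ r ∈ Q, q ≠ r → unitSquare q ∩ unitSquare r = ∅) :
    Q.card ≤ 8 := by
  classical
  have hmeet' : ∀ q ∈ Q, -1 ≤ q.1 - p.1 ∧ q.1 - p.1 ≤ 1 ∧ -1 ≤ q.2 - p.2 ∧ q.2 - p.2 ≤ 1 := by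
    intro q hq
    obtain ⟨x, hxq, hxp⟩ := hmeet q hq
    simp only [unitSquare, Set.mem_prod, Set.mem_Icc] at hxq hxp
    obtain ⟨⟨a1, a2⟩, ⟨a3, a4⟩⟩ := hxq
    obtain ⟨⟨b1, b2⟩, ⟨b3, b4⟩⟩ := hxp
    refine ⟨by linarith, by linarith, by linarith, by linarith⟩
  have hsep : ∀ q ∈ Q, ∀ r ∈ Q, q ≠ r → 1 < |q.1 - r.1| ∨ 1 < |q.2 - r.2| := by
    intro q hq r hr hne
    by_contra h
    push_neg at h
    obtain ⟨h1, h2⟩ := h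
    rw [abs_le] at h1 h2
    obtain ⟨h1a, h1b⟩ := h1
    obtain ⟨h2a, h2b⟩ := h2
    have hmem : (max q.1 r.1, max q.2 r.2) ∈ unitSquare q ∩ unitSquare r := by
      simp only [Set.mem_inter_iff, unitSquare, Set.mem_prod, Set.mem_Icc]
      exact ⟨⟨⟨le_max_left _ _, max_le (by linarith) (by linarith)⟩,
              ⟨le_max_left _ _, max_le (by linarith) (by linarith)⟩⟩,
             ⟨⟨le_max_right _ _, max_le (by linarith) (by linarith)⟩,
              ⟨le_max_right _ _, max_le (by linarith) (by linarith)⟩⟩⟩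
    rw [hdisj q hq r hr hne] at hmem
    exact hmem
  have hinj : Q.card ≤ (Finset.univ : Finset (Bool × Bool)).card := by
    apply Finset.card_le_card_of_injOn
      (fun q => (decide (q.1 - p.1 ≤ 0), decide (q.2 - p.2 ≤ 0)))
    · intro q _; exact Finset.mem_univ _
    · intro q hq r hr hfe
      by_contra hne
      obtain ⟨a1, a2, a3, a4⟩ := hmeet' q hq
      obtain ⟨b1, b2, b3, b4⟩ := hmeet' r hr
      simp only [Prod.mk.injEq, decide_eq_decide] at hfe
      have hfe1 := hfe.1
      have hfe2 := hfe.2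
      rcases hsep q hq r hr hne with h | h
      · rcases le_or_gt (q.1 - p.1) 0 with hc | hc
        · have hr1 := hfe1.mp hc
          rcases lt_abs.mp h with h | h <;> linarith
        · have hr1 : ¬ (r.1 - p.1 ≤ 0) := fun hh => absurd (hfe1.mpr hh) (not_le.mpr hc)
          push_neg at hr1
          rcases lt_abs.mp h with h | h <;> linarith
      · rcases le_or_gt (q.2 - p.2) 0 with hc | hc
        · have hr2 := hfe2.mp hc
          rcases lt_abs.mp h with h | h <;> linarith
        · have hr2 : ¬ (r.2 - p.2 ≤ 0) := fun hh => absurd (hfe2.mpr hh) (not_le.mpr hc)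
          push_neg at hr2
          rcases lt_abs.mp h with h | h <;> linarith
  simpa using hinj.trans (by simp)
end

section
/- Let S be a finite set of closed intervals of real numbers such that no real number is contained in more than k intervals of S. Then there is a partition of S into k sets M₁, …, M_k such that no two intersecting intervals are in the same set M_i, i.e., within each M_i the intervals are pairwise disjoint. -/
open scoped Classical

lemma aux_partition (k : ℕ) (hk : 0 < k) :
    ∀ (S : Finset (ℝ × ℝ)), (∀ I ∈ S, I.1 ≤ I.2) →
      (∀ t : ℝ, (S.filter fun I => t ∈ Set.Icc I.1 I.2).card ≤ k) →
      ∃ f : ℝ × ℝ → Fin k, ∀ I ∈ S, ∀ J ∈ S, I ≠ J → f I = f J →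
        Set.Icc I.1 I.2 ∩ Set.Icc J.1 J.2 = ∅ := by
  intro S
  induction S using Finset.strongInduction with
  | _ S ih =>
    intro hS hdepth
    rcases S.eq_empty_or_nonempty with rfl | hne
    · exact ⟨fun _ => ⟨0, hk⟩, fun I hI => absurd hI (Finset.notMem_empty _)⟩
    · obtain ⟨I₀, hI₀, hmax⟩ := S.exists_max_image Prod.fst hne
      set S' := S.erase I₀ with hS'
      have hsub : S' ⊂ S := Finset.erase_ssubset hI₀
      obtain ⟨f, hf⟩ := ih S' hsub (fun I hI => hS I (Finset.mem_of_mem_erase hI))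
        (fun t => le_trans (Finset.card_le_card
          (Finset.filter_subset_filter _ (Finset.erase_subset _ _))) (hdepth t))
      -- intervals in S' intersecting I₀
      set C := S'.filter (fun J => (Set.Icc J.1 J.2 ∩ Set.Icc I₀.1 I₀.2).Nonempty) with hC
      have hCsub : C ⊆ (S.filter fun J => I₀.1 ∈ Set.Icc J.1 J.2).erase I₀ := by
        intro J hJ
        rw [hC, Finset.mem_filter] at hJ
        obtain ⟨hJS', ⟨x, hx1, hx2⟩⟩ := hJ
        rw [Finset.mem_erase]
        refine ⟨Finset.ne_of_mem_erase hJS', ?_⟩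
        rw [Finset.mem_filter]
        refine ⟨Finset.mem_of_mem_erase hJS', ?_⟩
        constructor
        · exact hmax J (Finset.mem_of_mem_erase hJS')
        · exact le_trans hx2.1 hx1.2
      have hI₀mem : I₀ ∈ S.filter fun J => I₀.1 ∈ Set.Icc J.1 J.2 := by
        rw [Finset.mem_filter]
        exact ⟨hI₀, le_refl _, hS I₀ hI₀⟩
      have hCcard : C.card < k := by
        calc C.card ≤ ((S.filter fun J => I₀.1 ∈ Set.Icc J.1 J.2).erase I₀).card :=
              Finset.card_le_card hCsub
          _ < (S.filter fun J => I₀.1 ∈ Set.Icc J.1 J.2).card :=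
              Finset.card_erase_lt_of_mem hI₀mem
          _ ≤ k := hdepth I₀.1
      have : (C.image f).card < k := lt_of_le_of_lt Finset.card_image_le hCcard
      have hex : ∃ c : Fin k, c ∉ C.image f := by
        by_contra h
        push_neg at h
        have : (Finset.univ : Finset (Fin k)) ⊆ C.image f := fun c _ => h c
        have := Finset.card_le_card this
        simp [Finset.card_univ] at this
        omega
      obtain ⟨c, hc⟩ := hex
      refine ⟨Function.update f I₀ c, ?_⟩
      intro I hI J hJ hne' heq
      by_cases hII : I = I₀ <;> by_cases hJJ : J = I₀
      · exact absurd (hII.trans hJJ.symm) hne'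
      · -- I = I₀, J ≠ I₀
        subst hII
        rw [Function.update_self, Function.update_of_ne hJJ] at heq
        have hJS' : J ∈ S' := Finset.mem_erase.mpr ⟨hJJ, hJ⟩
        by_contra h
        have hJC : J ∈ C := by
          rw [hC, Finset.mem_filter]
          refine ⟨hJS', ?_⟩
          rw [Set.inter_comm]
          exact Set.nonempty_iff_ne_empty.mpr h
        exact hc (Finset.mem_image.mpr ⟨J, hJC, heq.symm⟩)
      · subst hJJ
        rw [Function.update_self, Function.update_of_ne hII] at heq
        have hIS' : I ∈ S' := Finset.mem_erase.mpr ⟨hII, hI⟩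
        by_contra h
        have hIC : I ∈ C := by
          rw [hC, Finset.mem_filter]
          exact ⟨hIS', Set.nonempty_iff_ne_empty.mpr h⟩
        exact hc (Finset.mem_image.mpr ⟨I, hIC, heq⟩)
      · rw [Function.update_of_ne hII, Function.update_of_ne hJJ] at heq
        exact hf I (Finset.mem_erase.mpr ⟨hII, hI⟩) J (Finset.mem_erase.mpr ⟨hJJ, hJ⟩) hne' heq

/-- If no real number is contained in more than `k` intervals of a finite set `S`
of closed intervals (each interval given by its pair of endpoints `I = (I.1, I.2)`
with `I.1 ≤ I.2`), then `S` can be partitioned into `k` classes (a coloring by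
`Fin k`) such that intervals in the same class are pairwise disjoint. -/
theorem partition_into_k_disjoint_families (k : ℕ) (S : Finset (ℝ × ℝ))
    (hS : ∀ I ∈ S, I.1 ≤ I.2)
    (hdepth : ∀ t : ℝ, (S.filter fun I => t ∈ Set.Icc I.1 I.2).card ≤ k) :
    ∃ f : {I : ℝ × ℝ // I ∈ S} → Fin k,
      ∀ I J : {I : ℝ × ℝ // I ∈ S}, I ≠ J → f I = f J →
        Set.Icc I.val.1 I.val.2 ∩ Set.Icc J.val.1 J.val.2 = ∅ := by
  rcases Nat.eq_zero_or_pos k with rfl | hk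
  · have hSempty : S = ∅ := by
      by_contra h
      obtain ⟨I, hI⟩ := Finset.nonempty_of_ne_empty h
      have h1 := hdepth I.1
      have : I ∈ S.filter fun J => I.1 ∈ Set.Icc J.1 J.2 := by
        rw [Finset.mem_filter]
        exact ⟨hI, le_refl _, hS I hI⟩
      have := Finset.card_pos.mpr ⟨I, this⟩
      omega
    subst hSempty
    exact ⟨fun I => absurd I.2 (Finset.notMem_empty _),
      fun I => absurd I.2 (Finset.notMem_empty _)⟩
  · obtain ⟨f, hf⟩ := aux_partition k hk S hS hdepth
    refine ⟨fun I => f I.val, ?_⟩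
    intro I J hne heq
    exact hf I.val I.2 J.val J.2 (fun h => hne (Subtype.ext h)) heq
end
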